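/- Let n ≥ 2 and let α = ∑_{i=1}^{n−1} a_i·x_i and β = ∑_{i=1}^{n−1} b_i·x_i be elements of the degree-2 part of S_{n−1}, with integer coefficients a_i, b_i. There exists a graded ring automorphism φ of S_{n−1} with φ(α) ≡ β modulo 2 (i.e., φ(α) − β ∈ 2·H for H the degree-2 part) and φ(α²) = β² if and only if there exists a permutation σ of {1,…,n−1} such that a_{σ(i)} ≡ b_i (mod 2) for all i and |a_{σ(i)}·a_{σ(j)}| = |b_i·b_j| for all i ≠ j. -/

import Mathlib

open MvPolynomial
/-- The defining ideal `⟨x₁²,…,x_m²⟩` of `S_m = H^*((ℂP¹)^m ; ℤ)`. -/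
noncomputable def sqIdeal (m : ℕ) : Ideal (MvPolynomial (Fin m) ℤ) :=
  Ideal.span (Set.range fun i : Fin m => (X i) ^ 2)

lemma coeff_zero_of_mem {m : ℕ} {p : MvPolynomial (Fin m) ℤ} (hp : p ∈ sqIdeal m) :
    ∀ d : Fin m →₀ ℕ, (∀ i, d i ≤ 1) → coeff d p = 0 := by
  induction hp using Submodule.span_induction with
  | mem p hpmem =>
    obtain ⟨i, rfl⟩ := hpmem
    intro d hd
    show coeff d (X i ^ 2) = 0
    rw [X_pow_eq_monomial, coeff_monomial, if_neg]
    intro h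
    have := hd i
    rw [← h] at this
    simp [Finsupp.single_apply] at this
  | zero => simp
  | add p q _ _ hp hq => intro d hd; simp [coeff_add, hp d hd, hq d hd]
  | smul r p _ hp =>
    intro d hd
    rw [smul_eq_mul, coeff_mul]
    apply Finset.sum_eq_zero
    intro uv huv
    rw [Finset.HasAntidiagonal.mem_antidiagonal] at huv
    rw [hp uv.2 fun i => ?_, mul_zero]
    have h1 : uv.1 i + uv.2 i = d i := by rw [← Finsupp.add_apply, huv]
    have := hd i
    omega

noncomputable def xq (m : ℕ) (i : Fin m) : MvPolynomial (Fin m) ℤ ⧸ sqIdeal m :=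
  Ideal.Quotient.mk (sqIdeal m) (X i)

lemma mk_C_mul_X (m : ℕ) (c : ℤ) (i : Fin m) :
    Ideal.Quotient.mk (sqIdeal m) (C c * X i) = c • xq m i := by
  have := map_smul (Ideal.Quotient.mkₐ ℤ (sqIdeal m)) c (X i)
  simpa [smul_eq_C_mul, xq] using this

lemma mk_linear (m : ℕ) (c : Fin m → ℤ) :
    Ideal.Quotient.mk (sqIdeal m) (∑ i, C (c i) * X i) = ∑ i, c i • xq m i := by
  rw [map_sum]
  exact Finset.sum_congr rfl fun i _ => mk_C_mul_X m (c i) i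

lemma single_le_one {m : ℕ} (j : Fin m) : ∀ i, (Finsupp.single j 1 : Fin m →₀ ℕ) i ≤ 1 := by
  intro i
  rw [Finsupp.single_apply]
  split <;> omega

lemma lin_inj {m : ℕ} {c d : Fin m → ℤ}
    (h : ∑ i, c i • xq m i = ∑ i, d i • xq m i) : c = d := by
  rw [← mk_linear, ← mk_linear, Ideal.Quotient.eq] at h
  have h2 : (∑ i, C (c i - d i) * X i) ∈ sqIdeal m := by
    convert h using 1
    rw [← Finset.sum_sub_distrib]
    exact Finset.sum_congr rfl fun i _ => by rw [C_sub, sub_mul]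
  funext j
  have h3 := coeff_zero_of_mem h2 (Finsupp.single j 1) (single_le_one j)
  classical
  rw [coeff_sum] at h3
  simp only [coeff_C_mul, coeff_X'] at h3
  rw [Finset.sum_congr rfl (fun i _ => by
    rw [mul_ite, mul_one, mul_zero, if_congr (Finsupp.single_left_inj one_ne_zero) rfl rfl])] at h3
  rw [Finset.sum_ite_eq' Finset.univ j (fun i => c i - d i)] at h3
  simp at h3
  omega

lemma xq_ne_zero {m : ℕ} (i : Fin m) : xq m i ≠ 0 := by
  intro h
  rw [xq, Ideal.Quotient.eq_zero_iff_mem] at h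
  have := coeff_zero_of_mem h (Finsupp.single i 1) (single_le_one i)
  simp at this

lemma pair_eq {m : ℕ} {i j k l : Fin m} (hkl : k ≠ l)
    (h : Finsupp.single i 1 + Finsupp.single j 1
       = (Finsupp.single k 1 + Finsupp.single l 1 : Fin m →₀ ℕ)) :
    (i = k ∧ j = l) ∨ (i = l ∧ j = k) := by
  classical
  have key : ∀ x : Fin m, i ≠ x → l ≠ x → i = i := fun _ _ _ => rfl
  rcases eq_or_ne i k with rfl | hik
  · left
    refine ⟨rfl, ?_⟩
    have h2 : Finsupp.single j 1 = (Finsupp.single l 1 : Fin m →₀ ℕ) := add_left_cancel h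
    exact (Finsupp.single_left_inj one_ne_zero).mp h2
  · have hil : i = l := by
      by_contra hil
      have hi := DFunLike.congr_fun h i
      rcases eq_or_ne j i with rfl | hji
      · simp [Finsupp.single_apply, Ne.symm hik, Ne.symm hil] at hi
      · simp [Finsupp.single_apply, Ne.symm hik, Ne.symm hil, hji] at hi
    subst hil
    right
    refine ⟨rfl, ?_⟩
    rw [add_comm (Finsupp.single k 1)] at h
    have h2 : Finsupp.single j 1 = (Finsupp.single k 1 : Fin m →₀ ℕ) := add_left_cancel h
    exact (Finsupp.single_left_inj one_ne_zero).mp h2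

lemma coeff_sq {m : ℕ} (c : Fin m → ℤ) {k l : Fin m} (hkl : k ≠ l) :
    coeff (Finsupp.single k 1 + Finsupp.single l 1) ((∑ i, C (c i) * X i) ^ 2)
      = c k * c l + c l * c k := by
  classical
  rw [sq, Finset.sum_mul_sum]
  have hterm : ∀ i j : Fin m, (C (c i) * X i) * (C (c j) * X j)
      = monomial (Finsupp.single i 1 + Finsupp.single j 1) (c i * c j) := by
    intro i j
    rw [X, X, C_mul_monomial, C_mul_monomial, monomial_mul]
    simp
  simp only [hterm]
  rw [coeff_sum]
  simp only [coeff_sum, coeff_monomial]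
  have hsplit : ∀ i j : Fin m,
      (if Finsupp.single i 1 + Finsupp.single j 1
          = Finsupp.single k 1 + Finsupp.single l 1 then c i * c j else 0)
        = (if i = k ∧ j = l then c i * c j else 0)
          + (if i = l ∧ j = k then c i * c j else 0) := by
    intro i j
    by_cases h : Finsupp.single i 1 + Finsupp.single j 1
        = (Finsupp.single k 1 + Finsupp.single l 1 : Fin m →₀ ℕ)
    · rw [if_pos h]
      rcases pair_eq hkl h with ⟨h1, h2⟩ | ⟨h1, h2⟩
      · rw [if_pos ⟨h1, h2⟩, if_neg fun hcon => hkl (h1.symm.trans hcon.1), add_zero]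
      · rw [if_neg fun hcon => hkl ((hcon.1.symm.trans h1 : k = l)), if_pos ⟨h1, h2⟩, zero_add]
    · rw [if_neg h, if_neg, if_neg, add_zero]
      · rintro ⟨rfl, rfl⟩
        rw [add_comm] at h
        exact h rfl
      · rintro ⟨rfl, rfl⟩
        exact h rfl
  simp only [hsplit, Finset.sum_add_distrib]
  congr 1
  · rw [Finset.sum_eq_single k]
    · rw [Finset.sum_eq_single l]
      · simp
      · intro y _ hy
        simp [hy]
      · simp
    · intro x _ hx
      exact Finset.sum_eq_zero fun y _ => by simp [hx]
    · simp
  · rw [Finset.sum_eq_single l]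
    · rw [Finset.sum_eq_single k]
      · simp
      · intro y _ hy
        simp [hy]
      · simp
    · intro x _ hx
      exact Finset.sum_eq_zero fun y _ => by simp [hx]
    · simp

lemma xq_mul_self {m : ℕ} (i : Fin m) : xq m i * xq m i = 0 := by
  rw [xq, ← map_mul, ← sq, Ideal.Quotient.eq_zero_iff_mem]
  exact Ideal.subset_span ⟨i, rfl⟩

lemma sq_rel {m : ℕ} {c d : Fin m → ℤ}
    (h : (∑ i, c i • xq m i) ^ 2 = (∑ i, d i • xq m i) ^ 2) :
    ∀ k l, k ≠ l → c k * c l = d k * d l := by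
  intro k l hkl
  rw [← mk_linear, ← mk_linear, ← map_pow, ← map_pow, Ideal.Quotient.eq] at h
  have h2 := coeff_zero_of_mem h (Finsupp.single k 1 + Finsupp.single l 1) ?_
  · rw [coeff_sub, coeff_sq c hkl, coeff_sq d hkl] at h2
    rw [mul_comm (c l) (c k), mul_comm (d l) (d k)] at h2
    linarith
  · intro i
    rw [Finsupp.add_apply]
    have := single_le_one k i
    have h4 := single_le_one l i
    have h5 : ¬((Finsupp.single k 1 : Fin m →₀ ℕ) i = 1 ∧ (Finsupp.single l 1 : Fin m →₀ ℕ) i = 1) := by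
      rintro ⟨ha, hb⟩
      rw [Finsupp.single_apply] at ha hb
      by_cases hki : k = i
      · by_cases hli : l = i
        · exact hkl (hki.trans hli.symm)
        · rw [if_neg hli] at hb; omega
      · rw [if_neg hki] at ha; omega
    omega

lemma sq_congr {m : ℕ} {c d : Fin m → ℤ}
    (h : ∀ k l, k ≠ l → c k * c l = d k * d l) :
    (∑ i, c i • xq m i) ^ 2 = (∑ i, d i • xq m i) ^ 2 := by
  rw [sq, sq, Finset.sum_mul_sum, Finset.sum_mul_sum]
  refine Finset.sum_congr rfl fun k _ => Finset.sum_congr rfl fun l _ => ?_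
  rw [smul_mul_smul_comm, smul_mul_smul_comm]
  by_cases hkl : k = l
  · subst hkl
    rw [xq_mul_self, smul_zero, smul_zero]
  · rw [h k l hkl]

lemma sign_exists {x y : ℤ} (h : |x| = |y|) : ∃ s : ℤ, (s = 1 ∨ s = -1) ∧ y = s * x := by
  rcases abs_eq_abs.mp h with h | h
  · exact ⟨1, Or.inl rfl, by omega⟩
  · exact ⟨-1, Or.inr rfl, by omega⟩

lemma sign_choice {m : ℕ} (c b : Fin m → ℤ)
    (h : ∀ i j, i ≠ j → |c i * c j| = |b i * b j|) :
    ∃ ε : Fin m → ℤ, (∀ i, ε i = 1 ∨ ε i = -1) ∧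
      ∀ i j, i ≠ j → ε i * ε j * (c i * c j) = b i * b j := by
  classical
  by_cases hS : ∃ i j, i ≠ j ∧ c i ≠ 0 ∧ c j ≠ 0
  · obtain ⟨i0, j0, hij, hi0, hj0⟩ := hS
    have hbne : ∀ i, c i ≠ 0 → b i ≠ 0 := by
      intro i hci
      rcases eq_or_ne i i0 with rfl | hii0
      · have hthis := h i j0 hij
        intro hb
        rw [hb, zero_mul, abs_zero, abs_eq_zero, mul_eq_zero] at hthis
        tauto
      · have hthis := h i i0 hii0
        intro hb
        rw [hb, zero_mul, abs_zero, abs_eq_zero, mul_eq_zero] at hthis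
        tauto
    have hbzero : ∀ i, c i = 0 → b i = 0 := by
      intro i hci
      rcases eq_or_ne i i0 with rfl | hii0
      · exact absurd hci hi0
      · have hthis := h i i0 hii0
        rw [hci, zero_mul, abs_zero, eq_comm, abs_eq_zero, mul_eq_zero] at hthis
        rcases hthis with hb | hb
        · exact hb
        · exact absurd hb (hbne i0 hi0)
    set s : Fin m → ℤ := fun i =>
      if hi : i = i0 then 1 else Classical.choose (sign_exists (h i0 i (Ne.symm hi))) with hs_def
    have hs : ∀ i (hii0 : i ≠ i0), (s i = 1 ∨ s i = -1) ∧
        b i0 * b i = s i * (c i0 * c i) := by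
      intro i hii0
      have := Classical.choose_spec (sign_exists (h i0 i (Ne.symm hii0)))
      simp only [hs_def, dif_neg hii0]
      exact this
    have hs1 : ∀ i, s i = 1 ∨ s i = -1 := by
      intro i
      rcases eq_or_ne i i0 with rfl | hii0
      · simp [hs_def]
      · exact (hs i hii0).1
    refine ⟨s, hs1, ?_⟩
    have key : ∀ i j, i ≠ j → i ≠ i0 → j ≠ i0 → c i ≠ 0 → c j ≠ 0 →
        s i * s j * (c i * c j) = b i * b j := by
      intro i j hijne hii0 hji0 hci hcj
      have e1 := (hs i hii0).2
      have e2 := (hs j hji0).2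
      -- abs versions
      have habs1 : |b i0| * |b i| = |c i0| * |c i| := by
        have := congrArg abs e1
        rw [abs_mul, abs_mul, abs_mul] at this
        rcases (hs i hii0).1 with h1 | h1 <;> rw [h1] at this <;> simpa using this
      have habs2 : |b i0| * |b j| = |c i0| * |c j| := by
        have := congrArg abs e2
        rw [abs_mul, abs_mul, abs_mul] at this
        rcases (hs j hji0).1 with h1 | h1 <;> rw [h1] at this <;> simpa using this
      have habs3 : |c i| * |c j| = |b i| * |b j| := by
        have := h i j hijne
        rw [abs_mul, abs_mul] at this
        exact this
      have hBne : |b i| * |b j| ≠ 0 :=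
        mul_ne_zero (abs_ne_zero.mpr (hbne i hci)) (abs_ne_zero.mpr (hbne j hcj))
      have hB0sq : |b i0| * |b i0| = |c i0| * |c i0| := by
        have hmul := congrArg₂ (· * ·) habs1 habs2
        have : (|b i0| * |b i0|) * (|b i| * |b j|) = (|c i0| * |c i0|) * (|b i| * |b j|) := by
          calc (|b i0| * |b i0|) * (|b i| * |b j|)
              = (|b i0| * |b i|) * (|b i0| * |b j|) := by ring
            _ = (|c i0| * |c i|) * (|c i0| * |c j|) := by rw [habs1, habs2]
            _ = (|c i0| * |c i0|) * (|c i| * |c j|) := by ring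
            _ = (|c i0| * |c i0|) * (|b i| * |b j|) := by rw [habs3]
        exact mul_right_cancel₀ hBne this
      have csq : c i0 * c i0 = b i0 * b i0 := by
        have h1 := abs_mul_abs_self (c i0)
        have h2 := abs_mul_abs_self (b i0)
        rw [← h1, ← h2, hB0sq]
      have hb0ne : b i0 * b i0 ≠ 0 := mul_ne_zero (hbne i0 hi0) (hbne i0 hi0)
      apply mul_left_cancel₀ hb0ne
      linear_combination (-(b i0 * b j)) * e1 + (-(s i * (c i0 * c i))) * e2 +
        (-(s i * s j * (c i * c j))) * csq
    intro i j hijne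
    rcases eq_or_ne i i0 with rfl | hii0
    · have h1 : s i = 1 := by simp [hs_def]
      rw [h1, one_mul]
      exact ((hs j (Ne.symm hijne)).2).symm
    · rcases eq_or_ne j i0 with rfl | hji0
      · have h1 : s j = 1 := by simp [hs_def]
        rw [h1, mul_one]
        have hthis := (hs i hii0).2
        linear_combination -hthis
      · rcases eq_or_ne (c i) 0 with hci | hci
        · rw [hci, zero_mul, mul_zero, hbzero i hci, zero_mul]
        · rcases eq_or_ne (c j) 0 with hcj | hcj
          · rw [hcj, mul_zero, mul_zero, hbzero j hcj, mul_zero]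
          · exact key i j hijne hii0 hji0 hci hcj
  · push_neg at hS
    refine ⟨fun _ => 1, fun _ => Or.inl rfl, fun i j hij => ?_⟩
    have hc : c i * c j = 0 := by
      rcases eq_or_ne (c i) 0 with h0 | h0
      · rw [h0, zero_mul]
      · rw [hS i j hij h0, mul_zero]
    have hb : b i * b j = 0 := by
      have := h i j hij
      rw [hc, abs_zero, eq_comm, abs_eq_zero] at this
      exact this
    rw [hc, hb, mul_zero]

noncomputable def permHom (m : ℕ) (π : Fin m → Fin m) (η : Fin m → ℤ) :
    MvPolynomial (Fin m) ℤ →ₐ[ℤ] MvPolynomial (Fin m) ℤ :=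
  aeval (fun i => C (η i) * X (π i))

lemma permHom_X (m : ℕ) (π : Fin m → Fin m) (η : Fin m → ℤ) (i : Fin m) :
    permHom m π η (X i) = C (η i) * X (π i) := aeval_X _ i

noncomputable def permEquiv (m : ℕ) (π : Equiv.Perm (Fin m)) (η : Fin m → ℤ)
    (hη : ∀ i, η i * η i = 1) :
    MvPolynomial (Fin m) ℤ ≃ₐ[ℤ] MvPolynomial (Fin m) ℤ :=
  AlgEquiv.ofAlgHom (permHom m π η) (permHom m (π.symm : Equiv.Perm (Fin m)) (fun j => η (π.symm j)))
    (by
      apply MvPolynomial.algHom_ext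
      intro j
      simp only [AlgHom.comp_apply, AlgHom.id_apply, permHom_X, map_mul]
      simp only [permHom, aeval_C, algebraMap_eq, aeval_X]
      simp only [Equiv.apply_symm_apply]
      rw [← mul_assoc, ← C_mul, hη, C_1, one_mul])
    (by
      apply MvPolynomial.algHom_ext
      intro j
      simp only [AlgHom.comp_apply, AlgHom.id_apply, permHom_X, map_mul]
      simp only [permHom, aeval_C, algebraMap_eq, aeval_X]
      simp only [Equiv.symm_apply_apply]
      rw [← mul_assoc, ← C_mul, hη, C_1, one_mul])

lemma permEquiv_apply (m : ℕ) (π : Equiv.Perm (Fin m)) (η : Fin m → ℤ)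
    (hη : ∀ i, η i * η i = 1) (p : MvPolynomial (Fin m) ℤ) :
    permEquiv m π η hη p = permHom m π η p := rfl



lemma permEquiv_ideal (m : ℕ) (π : Equiv.Perm (Fin m)) (η : Fin m → ℤ)
    (hη : ∀ i, η i * η i = 1) :
    sqIdeal m = (sqIdeal m).map ((permEquiv m π η hη).toRingEquiv : MvPolynomial (Fin m) ℤ →+* MvPolynomial (Fin m) ℤ) := by
  rw [sqIdeal, Ideal.map_span, ← Set.range_comp]
  have hcomp : (((permEquiv m π η hη).toRingEquiv : MvPolynomial (Fin m) ℤ →+* MvPolynomial (Fin m) ℤ) ∘ fun i : Fin m => (X i) ^ 2)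
      = (fun j : Fin m => (X j : MvPolynomial (Fin m) ℤ) ^ 2) ∘ (π : Fin m → Fin m) := by
    funext i
    show permEquiv m π η hη ((X i) ^ 2) = (X (π i)) ^ 2
    rw [permEquiv_apply, map_pow, permHom_X, mul_pow, ← C_pow, sq (η i), hη, C_1, one_mul]
  rw [hcomp, Set.range_comp, Set.range_eq_univ.mpr π.surjective, Set.image_univ]

noncomputable def permQuotEquiv (m : ℕ) (π : Equiv.Perm (Fin m)) (η : Fin m → ℤ)
    (hη : ∀ i, η i * η i = 1) :
    (MvPolynomial (Fin m) ℤ ⧸ sqIdeal m) ≃+* (MvPolynomial (Fin m) ℤ ⧸ sqIdeal m) :=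
  Ideal.quotientEquiv (sqIdeal m) (sqIdeal m) (permEquiv m π η hη).toRingEquiv
    (permEquiv_ideal m π η hη)

lemma permQuotEquiv_mk (m : ℕ) (π : Equiv.Perm (Fin m)) (η : Fin m → ℤ)
    (hη : ∀ i, η i * η i = 1) (p : MvPolynomial (Fin m) ℤ) :
    permQuotEquiv m π η hη (Ideal.Quotient.mk (sqIdeal m) p)
      = Ideal.Quotient.mk (sqIdeal m) (permEquiv m π η hη p) :=
  Ideal.quotientEquiv_mk _ _ _ _ p

lemma permQuotEquiv_xq (m : ℕ) (π : Equiv.Perm (Fin m)) (η : Fin m → ℤ)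
    (hη : ∀ i, η i * η i = 1) (i : Fin m) :
    permQuotEquiv m π η hη (xq m i) = η i • xq m (π i) := by
  rw [xq, permQuotEquiv_mk, permEquiv_apply, permHom_X, mk_C_mul_X]


lemma backward {m : ℕ} (a b : Fin m → ℤ) (σ : Equiv.Perm (Fin m))
    (h1 : ∀ i, a (σ i) ≡ b i [ZMOD 2])
    (h2 : ∀ i j, i ≠ j → |a (σ i) * a (σ j)| = |b i * b j|) :
    ∃ φ : (MvPolynomial (Fin m) ℤ ⧸ sqIdeal m) ≃+* (MvPolynomial (Fin m) ℤ ⧸ sqIdeal m),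
      Submodule.map φ.toRingHom.toIntAlgHom.toLinearMap
          (Submodule.span ℤ (Set.range fun i : Fin m => Ideal.Quotient.mk (sqIdeal m) (X i))) =
        Submodule.span ℤ (Set.range fun i : Fin m => Ideal.Quotient.mk (sqIdeal m) (X i)) ∧
      (∃ w ∈ Submodule.span ℤ (Set.range fun i : Fin m => Ideal.Quotient.mk (sqIdeal m) (X i)),
        φ (Ideal.Quotient.mk (sqIdeal m) (∑ i : Fin m, C (a i) * X i)) -
          Ideal.Quotient.mk (sqIdeal m) (∑ i : Fin m, C (b i) * X i) = 2 • w) ∧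
      φ ((Ideal.Quotient.mk (sqIdeal m) (∑ i : Fin m, C (a i) * X i)) ^ 2) =
        (Ideal.Quotient.mk (sqIdeal m) (∑ i : Fin m, C (b i) * X i)) ^ 2 := by
  classical
  obtain ⟨ε, hε1, hε2⟩ := sign_choice (fun i => a (σ i)) b h2
  have hη : ∀ i, ε (σ.symm i) * ε (σ.symm i) = 1 := by
    intro i
    rcases hε1 (σ.symm i) with h | h <;> rw [h] <;> norm_num
  set η : Fin m → ℤ := fun i => ε (σ.symm i) with hη_def
  have hr : (Set.range fun i : Fin m => Ideal.Quotient.mk (sqIdeal m) (X i))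
      = Set.range (xq m) := rfl
  have hALPHA : permQuotEquiv m σ.symm η hη
      (Ideal.Quotient.mk (sqIdeal m) (∑ i : Fin m, C (a i) * X i))
      = ∑ k, (ε k * a (σ k)) • xq m k := by
    rw [permQuotEquiv_mk, map_sum, map_sum]
    have hterm : ∀ i : Fin m, permEquiv m σ.symm η hη (C (a i) * X i)
        = C (a i * η i) * X (σ.symm i) := by
      intro i
      rw [permEquiv_apply, map_mul, permHom_X]
      have hC : permHom m (σ.symm : Equiv.Perm (Fin m)) η (C (a i)) = C (a i) := by
        simp [permHom, aeval_C, algebraMap_eq]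
      rw [hC, ← mul_assoc, ← C_mul]
    simp only [hterm, mk_C_mul_X]
    refine Fintype.sum_equiv σ.symm _ _ ?_
    intro i
    simp only [hη_def, Equiv.symm_apply_apply, Equiv.apply_symm_apply]
    rw [mul_comm]
  refine ⟨permQuotEquiv m σ.symm η hη, ?_, ?_, ?_⟩
  · rw [hr]
    apply le_antisymm
    · rw [Submodule.map_span, Submodule.span_le]
      rintro y ⟨p, ⟨i, rfl⟩, rfl⟩
      show permQuotEquiv m σ.symm η hη (xq m i) ∈ _
      rw [permQuotEquiv_xq]
      exact Submodule.smul_mem _ _ (Submodule.subset_span ⟨σ.symm i, rfl⟩)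
    · rw [Submodule.span_le]
      rintro y ⟨j, rfl⟩
      refine Submodule.mem_map.mpr ⟨ε j • xq m (σ j),
        Submodule.smul_mem _ _ (Submodule.subset_span ⟨σ j, rfl⟩), ?_⟩
      show permQuotEquiv m σ.symm η hη (ε j • xq m (σ j)) = xq m j
      rw [map_zsmul, permQuotEquiv_xq, Equiv.symm_apply_apply, smul_smul]
      have : η (σ j) = ε j := by rw [hη_def]; simp
      rw [this]
      rcases hε1 j with h | h <;> rw [h] <;> norm_num
  · -- modulo 2 condition
    have hφα : permQuotEquiv m σ.symm η hη
        (Ideal.Quotient.mk (sqIdeal m) (∑ i : Fin m, C (a i) * X i))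
        = ∑ k, (ε k * a (σ k)) • xq m k := hALPHA
    have hc : ∀ k : Fin m, ∃ d : ℤ, ε k * a (σ k) - b k = 2 * d := by
      intro k
      have hmk : a (σ k) % 2 = b k % 2 := h1 k
      refine ⟨(ε k * a (σ k) - b k) / 2, ?_⟩
      rcases hε1 k with h | h <;> rw [h] <;> omega
    choose d hd using hc
    refine ⟨∑ k, d k • xq m k,
      Submodule.sum_mem _ (fun k _ => Submodule.smul_mem _ _ (Submodule.subset_span ⟨k, rfl⟩)), ?_⟩
    rw [hφα, mk_linear, ← Finset.sum_sub_distrib]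
    have hterm2 : ∀ k : Fin m, (ε k * a (σ k)) • xq m k - b k • xq m k
        = d k • xq m k + d k • xq m k := by
      intro k
      rw [← sub_smul, hd k, two_mul, add_smul]
    rw [Finset.sum_congr rfl (fun k _ => hterm2 k), Finset.sum_add_distrib]
    exact (two_smul ℕ _).symm
  · -- squares condition
    have hφα : permQuotEquiv m σ.symm η hη
        (Ideal.Quotient.mk (sqIdeal m) (∑ i : Fin m, C (a i) * X i))
        = ∑ k, (ε k * a (σ k)) • xq m k := hALPHA
    rw [map_pow, hφα, mk_linear]
    apply sq_congr
    intro k l hkl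
    have := hε2 k l hkl
    linear_combination this

set_option maxHeartbeats 1000000

lemma forward {m : ℕ} (a b : Fin m → ℤ)
    (φ : (MvPolynomial (Fin m) ℤ ⧸ sqIdeal m) ≃+* (MvPolynomial (Fin m) ℤ ⧸ sqIdeal m))
    (hH : Submodule.map φ.toRingHom.toIntAlgHom.toLinearMap
          (Submodule.span ℤ (Set.range fun i : Fin m => Ideal.Quotient.mk (sqIdeal m) (X i))) =
        Submodule.span ℤ (Set.range fun i : Fin m => Ideal.Quotient.mk (sqIdeal m) (X i)))
    (hmod : ∃ w ∈ Submodule.span ℤ (Set.range fun i : Fin m => Ideal.Quotient.mk (sqIdeal m) (X i)),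
        φ (Ideal.Quotient.mk (sqIdeal m) (∑ i : Fin m, C (a i) * X i)) -
          Ideal.Quotient.mk (sqIdeal m) (∑ i : Fin m, C (b i) * X i) = 2 • w)
    (hsq : φ ((Ideal.Quotient.mk (sqIdeal m) (∑ i : Fin m, C (a i) * X i)) ^ 2) =
        (Ideal.Quotient.mk (sqIdeal m) (∑ i : Fin m, C (b i) * X i)) ^ 2) :
    ∃ σ : Equiv.Perm (Fin m),
      (∀ i, a (σ i) ≡ b i [ZMOD 2]) ∧
      ∀ i j, i ≠ j → |a (σ i) * a (σ j)| = |b i * b j| := by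
  classical
  have hr : (Set.range fun i : Fin m => Ideal.Quotient.mk (sqIdeal m) (X i))
      = Set.range (xq m) := rfl
  rw [hr] at hH hmod
  -- step 1 : coefficients of φ (xq m i)
  have hφx : ∀ i : Fin m, ∃ t : Fin m → ℤ, ∑ j, t j • xq m j = φ (xq m i) := by
    intro i
    have h1 : φ (xq m i) ∈ Submodule.span ℤ (Set.range (xq m)) := by
      rw [← hH]
      exact Submodule.mem_map.mpr ⟨xq m i, Submodule.subset_span ⟨i, rfl⟩, rfl⟩
    exact (Submodule.mem_span_range_iff_exists_fun ℤ).mp h1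
  choose t ht using hφx
  -- step 2 : each row has products vanishing
  have hxsq : ∀ i : Fin m, (xq m i) ^ 2 = 0 := by
    intro i
    rw [sq]
    exact xq_mul_self i
  have hrow : ∀ i : Fin m, ∀ j k, j ≠ k → t i j * t i k = 0 := by
    intro i j k hjk
    have h0 : (∑ j, t i j • xq m j) ^ 2 = (∑ j : Fin m, (0 : ℤ) • xq m j) ^ 2 := by
      rw [ht i, ← map_pow, hxsq i, map_zero]
      simp
    have := sq_rel h0 j k hjk
    simpa using this
  -- step 3 : nonzero rows
  have hne : ∀ i : Fin m, ∃ j, t i j ≠ 0 := by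
    intro i
    by_contra hcon
    push_neg at hcon
    have h0 : φ (xq m i) = 0 := by
      rw [← ht i]
      simp [hcon]
    exact xq_ne_zero i (φ.injective (by rw [h0, map_zero]))
  set π : Fin m → Fin m := fun i => Classical.choose (hne i) with hπ_def
  have hπ : ∀ i, t i (π i) ≠ 0 := fun i => Classical.choose_spec (hne i)
  have huniq : ∀ i j, j ≠ π i → t i j = 0 := by
    intro i j hj
    have := hrow i j (π i) hj
    rcases mul_eq_zero.mp this with h | h
    · exact h
    · exact absurd h (hπ i)
  have hφx' : ∀ i : Fin m, φ (xq m i) = t i (π i) • xq m (π i) := by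
    intro i
    rw [← ht i]
    rw [Finset.sum_eq_single (π i)]
    · intro j _ hj
      rw [huniq i j hj, zero_smul]
    · intro h
      exact absurd (Finset.mem_univ _) h
  -- helper to extract coefficients of a two-term relation
  have hpair : ∀ (u u' : ℤ) (i i' : Fin m), i ≠ i' → u • xq m i = u' • xq m i' → u = 0 := by
    intro u u' i i' hii' heq
    have hc : ∑ j, ((if j = i then u else 0) : ℤ) • xq m j
        = ∑ j, ((if j = i' then u' else 0) : ℤ) • xq m j := by
      simp only [ite_smul, zero_smul]
      rw [Finset.sum_ite_eq' Finset.univ i (fun j => u • xq m j)]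
      rw [Finset.sum_ite_eq' Finset.univ i' (fun j => u' • xq m j)]
      simpa using heq
    have := congrFun (lin_inj hc) i
    simpa [hii'] using this
  -- injectivity of π
  have hinj : Function.Injective π := by
    intro i i' hpi
    by_contra hii'
    have hcomm : φ ((t i' (π i')) • xq m i) = φ ((t i (π i)) • xq m i') := by
      rw [map_zsmul, map_zsmul, hφx' i, hφx' i', hpi, smul_smul, smul_smul, mul_comm]
    have heq := φ.injective hcomm
    exact hπ i' (hpair _ _ i i' hii' heq)
  have hbij : Function.Bijective π := Finite.injective_iff_bijective.mp hinj
  set τ : Equiv.Perm (Fin m) := Equiv.ofBijective π hbij with hτ_def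
  have hτ_apply : ∀ i, τ i = π i := fun i => rfl
  have hτ_symm : ∀ i, τ.symm (π i) = i := by
    intro i
    rw [← hτ_apply i, Equiv.symm_apply_apply]
  have hτ_symm' : ∀ k, π (τ.symm k) = k := by
    intro k
    rw [← hτ_apply, Equiv.apply_symm_apply]
  -- units
  have hunit : ∀ i, t i (π i) = 1 ∨ t i (π i) = -1 := by
    intro i
    have h1 : xq m (π i) ∈ Submodule.map φ.toRingHom.toIntAlgHom.toLinearMap
        (Submodule.span ℤ (Set.range (xq m))) := by
      rw [hH]
      exact Submodule.subset_span ⟨π i, rfl⟩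
    obtain ⟨y, hy, hLy⟩ := Submodule.mem_map.mp h1
    obtain ⟨c, hc⟩ := (Submodule.mem_span_range_iff_exists_fun ℤ).mp hy
    have hφy : φ y = ∑ j, (c j * t j (π j)) • xq m (π j) := by
      calc φ y = φ (∑ j, c j • xq m j) := by rw [hc]
        _ = ∑ j, φ (c j • xq m j) := map_sum _ _ _
        _ = ∑ j, (c j * t j (π j)) • xq m (π j) :=
            Finset.sum_congr rfl fun j _ => by rw [map_zsmul, hφx' j, smul_smul]
    have hre : φ y = ∑ k, (c (τ.symm k) * t (τ.symm k) (π (τ.symm k))) • xq m k := by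
      rw [hφy]
      refine Fintype.sum_equiv τ _ _ ?_
      intro j
      rw [Equiv.symm_apply_apply, hτ_apply]
    have hδ : xq m (π i) = ∑ k, ((if k = π i then (1 : ℤ) else 0)) • xq m k := by
      simp only [ite_smul, zero_smul, one_smul]
      rw [Finset.sum_ite_eq' Finset.univ (π i) (fun k => xq m k)]
      simp
    have heq2 : ∑ k, (c (τ.symm k) * t (τ.symm k) (π (τ.symm k))) • xq m k
        = ∑ k, ((if k = π i then (1 : ℤ) else 0)) • xq m k := by
      rw [← hre, ← hδ]
      exact hLy
    have hcoef := congrFun (lin_inj heq2) (π i)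
    rw [hτ_symm i] at hcoef
    simp only [if_pos rfl] at hcoef
    have : IsUnit (t i (π i)) := IsUnit.of_mul_eq_one _ (by rw [mul_comm]; exact hcoef)
    exact Int.isUnit_iff.mp this
  -- the permutation
  have hφα : φ (Ideal.Quotient.mk (sqIdeal m) (∑ i : Fin m, C (a i) * X i))
      = ∑ k, (a (τ.symm k) * t (τ.symm k) (π (τ.symm k))) • xq m k := by
    rw [mk_linear]
    calc φ (∑ i, a i • xq m i) = ∑ i, φ (a i • xq m i) := map_sum _ _ _
      _ = ∑ i, (a i * t i (π i)) • xq m (π i) :=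
          Finset.sum_congr rfl fun i _ => by rw [map_zsmul, hφx' i, smul_smul]
      _ = ∑ k, (a (τ.symm k) * t (τ.symm k) (π (τ.symm k))) • xq m k := by
          refine Fintype.sum_equiv τ _ _ ?_
          intro j
          rw [Equiv.symm_apply_apply, hτ_apply]
  refine ⟨τ.symm, ?_, ?_⟩
  · -- mod 2 condition
    intro i
    obtain ⟨w, hw, hweq⟩ := hmod
    obtain ⟨dw, hdw⟩ := (Submodule.mem_span_range_iff_exists_fun ℤ).mp hw
    rw [hφα, mk_linear, ← hdw] at hweq
    have hcomb : ∑ k, ((a (τ.symm k) * t (τ.symm k) (π (τ.symm k))) - b k) • xq m k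
        = ∑ k, (2 * dw k) • xq m k := by
      calc ∑ k, ((a (τ.symm k) * t (τ.symm k) (π (τ.symm k))) - b k) • xq m k
          = ∑ k, ((a (τ.symm k) * t (τ.symm k) (π (τ.symm k))) • xq m k - b k • xq m k) :=
            Finset.sum_congr rfl fun k _ => sub_smul _ _ _
        _ = (∑ k, (a (τ.symm k) * t (τ.symm k) (π (τ.symm k))) • xq m k)
            - ∑ k, b k • xq m k := Finset.sum_sub_distrib _ _
        _ = 2 • ∑ k, dw k • xq m k := hweq
        _ = (∑ k, dw k • xq m k) + ∑ k, dw k • xq m k := two_smul ℕ _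
        _ = ∑ k, (dw k • xq m k + dw k • xq m k) := Finset.sum_add_distrib.symm
        _ = ∑ k, (2 * dw k) • xq m k :=
            Finset.sum_congr rfl fun k _ => by rw [two_mul, add_smul]
    have hcoef := congrFun (lin_inj hcomb) i
    show a (τ.symm i) % 2 = b i % 2
    rcases hunit (τ.symm i) with h | h <;> rw [h] at hcoef <;> omega
  · -- squares condition
    intro i j hij
    have hsq2 : (∑ k, (a (τ.symm k) * t (τ.symm k) (π (τ.symm k))) • xq m k) ^ 2
        = (∑ k, b k • xq m k) ^ 2 := by
      rw [← hφα, ← mk_linear, ← map_pow, hsq]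
    have hprod := sq_rel hsq2 i j hij
    have habs : ∀ k, |a (τ.symm k) * t (τ.symm k) (π (τ.symm k))| = |a (τ.symm k)| := by
      intro k
      rcases hunit (τ.symm k) with h | h <;> rw [h] <;> simp [abs_mul]
    calc |a (τ.symm i) * a (τ.symm j)|
        = |a (τ.symm i)| * |a (τ.symm j)| := abs_mul _ _
      _ = |a (τ.symm i) * t (τ.symm i) (π (τ.symm i))|
          * |a (τ.symm j) * t (τ.symm j) (π (τ.symm j))| := by rw [habs i, habs j]
      _ = |(a (τ.symm i) * t (τ.symm i) (π (τ.symm i)))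
          * (a (τ.symm j) * t (τ.symm j) (π (τ.symm j)))| := (abs_mul _ _).symm
      _ = |b i * b j| := by rw [hprod]

/-- For `α = ∑ a_i x_i` and `β = ∑ b_i x_i` in the degree-two part of `S_{n-1}`, there is a
graded ring automorphism `φ` of `S_{n-1}` with `φ(α) ≡ β (mod 2)` and `φ(α²) = β²` iff there
is a permutation `σ` with `a (σ i) ≡ b i (mod 2)` for all `i` and
`|a (σ i) * a (σ j)| = |b i * b j|` for all `i ≠ j`. -/
theorem stmt12 (n : ℕ) (hn : 2 ≤ n) (a b : Fin (n - 1) → ℤ) :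
    (∃ φ : (MvPolynomial (Fin (n - 1)) ℤ ⧸ sqIdeal (n - 1)) ≃+*
        (MvPolynomial (Fin (n - 1)) ℤ ⧸ sqIdeal (n - 1)),
      Submodule.map φ.toRingHom.toIntAlgHom.toLinearMap
          (Submodule.span ℤ (Set.range fun i : Fin (n - 1) =>
            Ideal.Quotient.mk (sqIdeal (n - 1)) (X i))) =
        Submodule.span ℤ (Set.range fun i : Fin (n - 1) =>
          Ideal.Quotient.mk (sqIdeal (n - 1)) (X i)) ∧
      (∃ w ∈ Submodule.span ℤ (Set.range fun i : Fin (n - 1) =>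
            Ideal.Quotient.mk (sqIdeal (n - 1)) (X i)),
        φ (Ideal.Quotient.mk (sqIdeal (n - 1)) (∑ i : Fin (n - 1), C (a i) * X i)) -
          Ideal.Quotient.mk (sqIdeal (n - 1)) (∑ i : Fin (n - 1), C (b i) * X i) =
            2 • w) ∧
      φ ((Ideal.Quotient.mk (sqIdeal (n - 1)) (∑ i : Fin (n - 1), C (a i) * X i)) ^ 2) =
        (Ideal.Quotient.mk (sqIdeal (n - 1)) (∑ i : Fin (n - 1), C (b i) * X i)) ^ 2) ↔
    (∃ σ : Equiv.Perm (Fin (n - 1)),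
      (∀ i, a (σ i) ≡ b i [ZMOD 2]) ∧
      ∀ i j, i ≠ j → |a (σ i) * a (σ j)| = |b i * b j|) := by
  constructor
  · rintro ⟨φ, hH, hmod, hsq⟩
    exact forward a b φ hH hmod hsq
  · rintro ⟨σ, h1, h2⟩
    exact backward a b σ h1 h2
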